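/- Let θ ∈ (0, 1/2] and let n ≥ 1 be an integer. If U : S_{T[θ,S_n]} → S_{T[θ,S_n]} is an isometry satisfying −U(S_{T[θ,S_n]}) ⊆ U(S_{T[θ,S_n]}), then −U(e_i) = U(−e_i) for every positive integer i. -/

import Mathlib

open scoped BigOperators

noncomputable section

/-- Projection of a finitely supported vector onto the coordinates in `E`. -/
def tsProj (E : Finset ℕ+) (x : ℕ+ →₀ ℝ) : ℕ+ →₀ ℝ :=
  x.filter fun i => i ∈ E

/-- The Schreier families `S_n` on the positive integers:
`S₁` consists of the sets `F` with `|F| ≤ min F` (together with `∅`), and `S_{n+1}`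
consists of unions `F₁ ∪ ⋯ ∪ F_d` of nonempty members `F₁ < ⋯ < F_d` of `S_n`
with `d ≤ min F₁` (together with `∅`). -/
def Schreier : ℕ → Set (Finset ℕ+)
  | 0 => {F | F.card ≤ 1}
  | 1 => {F | ∀ a ∈ F, F.card ≤ (a : ℕ)}
  | n + 2 =>
      {F | F = ∅ ∨
        ∃ (d : ℕ) (G : Fin d → Finset ℕ+),
          0 < d ∧ (∀ i, G i ∈ Schreier (n + 1)) ∧ (∀ i, (G i).Nonempty) ∧
          (∀ i j : Fin d, i < j → ∀ a ∈ G i, ∀ b ∈ G j, a < b) ∧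
          (∀ i, ∀ a ∈ G i, d ≤ (a : ℕ)) ∧ F = Finset.univ.biUnion G}

/-- A tuple of nonempty finite sets `E 0 < E 1 < ⋯` whose set of minima belongs to `S`. -/
def TsAdmissible (S : Set (Finset ℕ+)) {d : ℕ} (E : Fin d → Finset ℕ+) : Prop :=
  (∀ i, (E i).Nonempty) ∧
  (∀ i j : Fin d, i < j → ∀ a ∈ E i, ∀ b ∈ E j, a < b) ∧
  ∃ μ : Fin d → ℕ+, (∀ i, IsLeast (↑(E i) : Set ℕ+) (μ i)) ∧
    Finset.univ.image μ ∈ S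

/-- The iterated norms `‖·‖_m` in the construction of the Tsirelson norm:
`‖x‖₀` is the supremum norm and
`‖x‖_{m+1} = max(‖x‖_m, sup{θ ∑ᵢ ‖Eᵢ x‖_m : E₁ < ⋯ < E_d, {min Eᵢ} ∈ S})`. -/
def tnormAux (θ : ℝ) (S : Set (Finset ℕ+)) : ℕ → (ℕ+ →₀ ℝ) → ℝ
  | 0, x => ⨆ i, |x i|
  | m + 1, x =>
      max (tnormAux θ S m x)
        (sSup {r : ℝ | ∃ (d : ℕ) (E : Fin d → Finset ℕ+), TsAdmissible S E ∧
          r = θ * ∑ i, tnormAux θ S m (tsProj (E i) x)})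

/-- The Tsirelson norm `‖x‖_{θ,S} = sup_m ‖x‖_m` on `c₀₀`. -/
def tnorm (θ : ℝ) (S : Set (Finset ℕ+)) (x : ℕ+ →₀ ℝ) : ℝ :=
  ⨆ m : ℕ, tnormAux θ S m x

/-- `X`, together with the sequence `e` of unit vectors, is (a realization of) the
Tsirelson space `T[θ, S_n]`: a Banach space containing `c₀₀` isometrically
(w.r.t. the Tsirelson norm) as a dense subspace, in which `(e i)` is a
(1-unconditional) basis, i.e. every `x` has a unique expansion `x = ∑ᵢ aᵢ eᵢ`. -/
structure IsTsirelsonSpace (θ : ℝ) (n : ℕ) (X : Type*) [NormedAddCommGroup X]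
    [NormedSpace ℝ X] (e : ℕ+ → X) : Prop where
  complete : CompleteSpace X
  norm_embed : ∀ a : ℕ+ →₀ ℝ, ‖a.sum fun i c => c • e i‖ = tnorm θ (Schreier n) a
  dense_embed : DenseRange fun a : ℕ+ →₀ ℝ => a.sum fun i c => c • e i
  expansion : ∀ x : X, ∃! a : ℕ+ → ℝ, HasSum (fun i => a i • e i) x

namespace TsAux

/-- The ℓ¹ norm of a finitely supported vector. -/
def absSum (x : ℕ+ →₀ ℝ) : ℝ := ∑ k ∈ x.support, |x k|

lemma absSum_nonneg (x : ℕ+ →₀ ℝ) : 0 ≤ absSum x :=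
  Finset.sum_nonneg fun _ _ => abs_nonneg _

lemma absSum_eq_on {x : ℕ+ →₀ ℝ} {t : Finset ℕ+} (h : x.support ⊆ t) :
    absSum x = ∑ k ∈ t, |x k| :=
  Finset.sum_subset h (fun k _ hk => by simp [Finsupp.notMem_support_iff.mp hk])

lemma abs_apply_le_absSum (x : ℕ+ →₀ ℝ) (j : ℕ+) : |x j| ≤ absSum x := by
  by_cases hj : j ∈ x.support
  · exact Finset.single_le_sum (f := fun k => |x k|) (fun k _ => abs_nonneg _) hj
  · simpa [Finsupp.notMem_support_iff.mp hj] using absSum_nonneg x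

lemma absSum_single (j : ℕ+) (c : ℝ) : absSum (Finsupp.single j c) = |c| := by
  by_cases hc : c = 0
  · simp [absSum, hc]
  · rw [absSum, Finsupp.support_single_ne_zero _ hc]
    simp

lemma absSum_add_le (x y : ℕ+ →₀ ℝ) : absSum (x + y) ≤ absSum x + absSum y := by
  classical
  have hsub : (x + y).support ⊆ x.support ∪ y.support := Finsupp.support_add
  rw [absSum_eq_on hsub, absSum_eq_on (Finset.subset_union_left (s₂ := y.support)),
    absSum_eq_on (Finset.subset_union_right (s₁ := x.support)), ← Finset.sum_add_distrib]
  exact Finset.sum_le_sum fun k _ => by simpa using abs_add_le (x k) (y k)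

lemma sum_absSum_proj_le {d : ℕ} {E : Fin d → Finset ℕ+}
    (hE : ∀ i j : Fin d, i < j → ∀ a ∈ E i, ∀ b ∈ E j, a < b) (x : ℕ+ →₀ ℝ) :
    ∑ l : Fin d, absSum (tsProj (E l) x) ≤ absSum x := by
  classical
  have habs : ∀ l, absSum (tsProj (E l) x) = ∑ k ∈ x.support.filter (· ∈ E l), |x k| := by
    intro l
    rw [absSum, tsProj, Finsupp.support_filter]
    refine Finset.sum_congr rfl fun k hk => ?_
    rw [Finsupp.filter_apply_pos]
    exact (Finset.mem_filter.mp hk).2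
  have hdisj : ((Finset.univ : Finset (Fin d)) : Set (Fin d)).PairwiseDisjoint
      (fun l => x.support.filter (· ∈ E l)) := by
    intro a _ b _ hab
    refine Finset.disjoint_left.mpr ?_
    intro k hka hkb
    have h1 := (Finset.mem_filter.mp hka).2
    have h2 := (Finset.mem_filter.mp hkb).2
    rcases hab.lt_or_gt with h | h
    · exact absurd rfl (ne_of_lt (hE a b h k h1 k h2))
    · exact absurd rfl (ne_of_lt (hE b a h k h2 k h1))
  calc ∑ l : Fin d, absSum (tsProj (E l) x)
      = ∑ l : Fin d, ∑ k ∈ x.support.filter (· ∈ E l), |x k| :=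
        Finset.sum_congr rfl fun l _ => habs l
    _ = ∑ k ∈ Finset.univ.biUnion (fun l => x.support.filter (· ∈ E l)), |x k| :=
        (Finset.sum_biUnion hdisj).symm
    _ ≤ ∑ k ∈ x.support, |x k| := by
        refine Finset.sum_le_sum_of_subset_of_nonneg ?_ (fun k _ _ => abs_nonneg _)
        exact Finset.biUnion_subset.mpr fun l _ => Finset.filter_subset _ _
    _ = absSum x := rfl

end TsAux

namespace TsAux

variable {θ : ℝ} {S : Set (Finset ℕ+)}

/-- The set over which the `sSup` is taken at level `m+1`. -/
def TSet (θ : ℝ) (S : Set (Finset ℕ+)) (m : ℕ) (x : ℕ+ →₀ ℝ) : Set ℝ :=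
  {r : ℝ | ∃ (d : ℕ) (E : Fin d → Finset ℕ+), TsAdmissible S E ∧
    r = θ * ∑ i, tnormAux θ S m (tsProj (E i) x)}

lemma tnormAux_zero (x : ℕ+ →₀ ℝ) : tnormAux θ S 0 x = ⨆ j, |x j| := rfl

lemma tnormAux_succ (m : ℕ) (x : ℕ+ →₀ ℝ) :
    tnormAux θ S (m + 1) x = max (tnormAux θ S m x) (sSup (TSet θ S m x)) := rfl

lemma zero_mem_TSet (hS : (∅ : Finset ℕ+) ∈ S) (m : ℕ) (x : ℕ+ →₀ ℝ) :
    (0 : ℝ) ∈ TSet θ S m x := by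
  refine ⟨0, fun l => l.elim0, ⟨fun l => l.elim0, fun l => l.elim0,
    fun l => l.elim0, fun l => l.elim0, by simpa using hS⟩, by simp⟩

lemma bddAbove_abs (x : ℕ+ →₀ ℝ) : BddAbove (Set.range fun j : ℕ+ => |x j|) :=
  ⟨absSum x, by rintro _ ⟨j, rfl⟩; exact abs_apply_le_absSum x j⟩

lemma abs_le_tnormAux_zero (x : ℕ+ →₀ ℝ) (j : ℕ+) : |x j| ≤ tnormAux θ S 0 x :=
  le_ciSup (bddAbove_abs x) j

lemma tnormAux_le_absSum (hθ0 : 0 ≤ θ) (hθ1 : θ ≤ 1) (hS : (∅ : Finset ℕ+) ∈ S) :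
    ∀ (m : ℕ) (x : ℕ+ →₀ ℝ), tnormAux θ S m x ≤ absSum x := by
  intro m
  induction m with
  | zero =>
    intro x
    exact ciSup_le fun j => abs_apply_le_absSum x j
  | succ m IH =>
    intro x
    rw [tnormAux_succ]
    refine max_le (IH x) (csSup_le ⟨0, zero_mem_TSet hS m x⟩ ?_)
    rintro r ⟨d, E, hadm, rfl⟩
    calc θ * ∑ l, tnormAux θ S m (tsProj (E l) x)
        ≤ θ * ∑ l, absSum (tsProj (E l) x) := by
          refine mul_le_mul_of_nonneg_left (Finset.sum_le_sum fun l _ => IH _) hθ0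
      _ ≤ θ * absSum x := mul_le_mul_of_nonneg_left (sum_absSum_proj_le hadm.2.1 x) hθ0
      _ ≤ absSum x := mul_le_of_le_one_left (absSum_nonneg x) hθ1

lemma bddAbove_TSet (hθ0 : 0 ≤ θ) (hθ1 : θ ≤ 1) (hS : (∅ : Finset ℕ+) ∈ S)
    (m : ℕ) (x : ℕ+ →₀ ℝ) : BddAbove (TSet θ S m x) := by
  refine ⟨absSum x, ?_⟩
  rintro r ⟨d, E, hadm, rfl⟩
  calc θ * ∑ l, tnormAux θ S m (tsProj (E l) x)
      ≤ θ * ∑ l, absSum (tsProj (E l) x) :=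
        mul_le_mul_of_nonneg_left
          (Finset.sum_le_sum fun l _ => tnormAux_le_absSum hθ0 hθ1 hS m _) hθ0
    _ ≤ θ * absSum x := mul_le_mul_of_nonneg_left (sum_absSum_proj_le hadm.2.1 x) hθ0
    _ ≤ absSum x := mul_le_of_le_one_left (absSum_nonneg x) hθ1

lemma tnormAux_nonneg : ∀ (m : ℕ) (x : ℕ+ →₀ ℝ), 0 ≤ tnormAux θ S m x := by
  intro m
  induction m with
  | zero => intro x; exact Real.iSup_nonneg fun j => abs_nonneg _
  | succ m IH => intro x; rw [tnormAux_succ]; exact le_max_of_le_left (IH x)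

lemma tnormAux_mono_succ (m : ℕ) (x : ℕ+ →₀ ℝ) :
    tnormAux θ S m x ≤ tnormAux θ S (m + 1) x := by
  rw [tnormAux_succ]; exact le_max_left _ _

lemma bddAbove_range_tnormAux (hθ0 : 0 ≤ θ) (hθ1 : θ ≤ 1) (hS : (∅ : Finset ℕ+) ∈ S)
    (x : ℕ+ →₀ ℝ) : BddAbove (Set.range fun m => tnormAux θ S m x) :=
  ⟨absSum x, by rintro _ ⟨m, rfl⟩; exact tnormAux_le_absSum hθ0 hθ1 hS m x⟩

lemma tnormAux_le_tnorm (hθ0 : 0 ≤ θ) (hθ1 : θ ≤ 1) (hS : (∅ : Finset ℕ+) ∈ S)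
    (m : ℕ) (x : ℕ+ →₀ ℝ) : tnormAux θ S m x ≤ tnorm θ S x :=
  le_ciSup (bddAbove_range_tnormAux hθ0 hθ1 hS x) m

lemma abs_le_tnorm (hθ0 : 0 ≤ θ) (hθ1 : θ ≤ 1) (hS : (∅ : Finset ℕ+) ∈ S)
    (x : ℕ+ →₀ ℝ) (j : ℕ+) : |x j| ≤ tnorm θ S x :=
  (abs_le_tnormAux_zero x j).trans (tnormAux_le_tnorm hθ0 hθ1 hS 0 x)

lemma tnorm_le (B : ℝ) (h : ∀ m, tnormAux θ S m x ≤ B) : tnorm θ S x ≤ B :=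
  ciSup_le h

end TsAux

namespace TsAux

variable {θ : ℝ} {S : Set (Finset ℕ+)}

lemma tnormAux_le_max (hθ0 : 0 ≤ θ) (hθ1 : θ ≤ 1) (hS : (∅ : Finset ℕ+) ∈ S) :
    ∀ (m : ℕ) (x : ℕ+ →₀ ℝ),
      tnormAux θ S m x ≤ max (tnormAux θ S 0 x) (θ * absSum x) := by
  intro m
  induction m with
  | zero => intro x; exact le_max_left _ _
  | succ m IH =>
    intro x
    rw [tnormAux_succ]
    refine max_le (IH x) (le_max_of_le_right ?_)
    refine csSup_le ⟨0, zero_mem_TSet hS m x⟩ ?_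
    rintro r ⟨d, E, hadm, rfl⟩
    calc θ * ∑ l, tnormAux θ S m (tsProj (E l) x)
        ≤ θ * ∑ l, absSum (tsProj (E l) x) :=
          mul_le_mul_of_nonneg_left
            (Finset.sum_le_sum fun l _ => tnormAux_le_absSum hθ0 hθ1 hS m _) hθ0
      _ ≤ θ * absSum x := mul_le_mul_of_nonneg_left (sum_absSum_proj_le hadm.2.1 x) hθ0

lemma tnorm_le_max (hθ0 : 0 ≤ θ) (hθ1 : θ ≤ 1) (hS : (∅ : Finset ℕ+) ∈ S)
    (x : ℕ+ →₀ ℝ) : tnorm θ S x ≤ max (tnormAux θ S 0 x) (θ * absSum x) :=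
  ciSup_le (fun m => tnormAux_le_max hθ0 hθ1 hS m x)

lemma tnorm_single_one (hθ0 : 0 ≤ θ) (hθh : θ ≤ 1 / 2) (hS : (∅ : Finset ℕ+) ∈ S)
    (j : ℕ+) : tnorm θ S (Finsupp.single j 1) = 1 := by
  have hθ1 : θ ≤ 1 := hθh.trans (by norm_num)
  refine le_antisymm ?_ ?_
  · refine (tnorm_le_max hθ0 hθ1 hS _).trans (max_le ?_ ?_)
    · refine ciSup_le fun k => ?_
      rcases eq_or_ne k j with rfl | hk
      · simp
      · simp [Finsupp.single_apply, (Ne.symm hk)]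
    · rw [absSum_single]
      simpa using hθ1
  · have := abs_le_tnorm hθ0 hθ1 hS (Finsupp.single j 1) j
    simpa using this

lemma tnorm_pair (hθ0 : 0 ≤ θ) (hθh : θ ≤ 1 / 2) (hS : (∅ : Finset ℕ+) ∈ S)
    {i j : ℕ+} (hij : i ≠ j) {c : ℝ} (hc : |c| = 1) :
    tnorm θ S (Finsupp.single i 1 + Finsupp.single j c) = 1 := by
  have hθ1 : θ ≤ 1 := hθh.trans (by norm_num)
  set b := Finsupp.single i (1 : ℝ) + Finsupp.single j c with hbdef
  have happly : ∀ k : ℕ+, b k = (if i = k then (1:ℝ) else 0) + (if j = k then c else 0) := by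
    intro k
    simp [hbdef, Finsupp.single_apply]
  have hA : absSum b ≤ 2 := by
    refine (absSum_add_le _ _).trans ?_
    rw [absSum_single, absSum_single, hc]
    norm_num
  refine le_antisymm ?_ ?_
  · refine (tnorm_le_max hθ0 hθ1 hS _).trans (max_le ?_ ?_)
    · refine ciSup_le fun k => ?_
      rw [happly k]
      by_cases hik : i = k
      · have hjk : ¬ j = k := fun h => hij (hik.trans h.symm)
        simp [hik, hjk]
      · by_cases hjk : j = k
        · simp [hik, hjk, hc.le]
        · simp [hik, hjk]
    · nlinarith [absSum_nonneg b]
  · have h1 := abs_le_tnorm hθ0 hθ1 hS b i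
    rw [happly i] at h1
    have hji : j ≠ i := Ne.symm hij
    simpa [hji] using h1

end TsAux

namespace TsAux

variable {θ : ℝ} {S : Set (Finset ℕ+)}

/-- Key inequality: subtracting `e i` can increase the norm only through the
coordinate `i` (up to a factor `θ` at positive levels). -/
lemma tnormAux_sub_single_le (hθ0 : 0 < θ) (hθ1 : θ ≤ 1) (hS : (∅ : Finset ℕ+) ∈ S) :
    ∀ (m : ℕ) (b : ℕ+ →₀ ℝ) (i : ℕ+), b i ≤ 1 →
      tnormAux θ S m (b - Finsupp.single i 1)
        ≤ max (1 - b i) (tnormAux θ S m b + θ * (1 - b i)) := by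
  intro m
  induction m with
  | zero =>
    intro b i hbi
    have hθbi : 0 ≤ θ * (1 - b i) := mul_nonneg hθ0.le (by linarith)
    refine ciSup_le fun k => ?_
    by_cases hk : k = i
    · subst hk
      have h1 : (b - Finsupp.single k (1:ℝ)) k = b k - 1 := by
        simp [Finsupp.sub_apply]
      rw [h1, abs_of_nonpos (by linarith)]
      exact le_max_of_le_left (by linarith)
    · have h1 : (b - Finsupp.single i (1:ℝ)) k = b k := by
        rw [Finsupp.sub_apply, Finsupp.single_eq_of_ne' (Ne.symm hk), sub_zero]
      rw [h1]
      refine le_max_of_le_right ?_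
      have h2 : |b k| ≤ tnormAux θ S 0 b := abs_le_tnormAux_zero b k
      have h3 := abs_nonneg (b k)
      linarith
  | succ m IH =>
    intro b i hbi
    have hθbi : 0 ≤ θ * (1 - b i) := mul_nonneg hθ0.le (by linarith)
    rw [tnormAux_succ]
    refine max_le ?_ ?_
    · refine (IH b i hbi).trans (max_le_max le_rfl ?_)
      exact add_le_add (tnormAux_mono_succ m b) le_rfl
    · refine csSup_le ⟨0, zero_mem_TSet hS m _⟩ ?_
      rintro r ⟨d, E, hadm, rfl⟩
      have hKmem : θ * ∑ l, tnormAux θ S m (tsProj (E l) b) ∈ TSet θ S m b :=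
        ⟨d, E, hadm, rfl⟩
      have hK : θ * ∑ l, tnormAux θ S m (tsProj (E l) b) ≤ tnormAux θ S (m + 1) b := by
        rw [tnormAux_succ]
        exact le_max_of_le_right (le_csSup (bddAbove_TSet hθ0.le hθ1 hS m b) hKmem)
      have hfilter_sub : ∀ (F : Finset ℕ+),
          tsProj F (b - Finsupp.single i 1) = tsProj F b - tsProj F (Finsupp.single i 1) := by
        intro F
        ext k
        by_cases hk : k ∈ F <;>
          simp [tsProj, Finsupp.filter_apply, hk, Finsupp.sub_apply]
      by_cases hiE : ∃ L, i ∈ E L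
      · obtain ⟨L, hL⟩ := hiE
        have hnotin : ∀ l, l ≠ L → i ∉ E l := by
          intro l hl hmem
          rcases hl.lt_or_gt with h | h
          · exact absurd rfl (ne_of_lt (hadm.2.1 l L h i hmem i hL))
          · exact absurd rfl (ne_of_lt (hadm.2.1 L l h i hL i hmem))
        have hprojL : tsProj (E L) (b - Finsupp.single i 1)
            = tsProj (E L) b - Finsupp.single i 1 := by
          have h1 : tsProj (E L) (Finsupp.single i (1 : ℝ)) = Finsupp.single i 1 :=
            Finsupp.filter_single_of_pos _ hL
          rw [hfilter_sub, h1]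
        have hprojl : ∀ l, l ≠ L →
            tsProj (E l) (b - Finsupp.single i 1) = tsProj (E l) b := by
          intro l hl
          have h0 : tsProj (E l) (Finsupp.single i (1 : ℝ)) = 0 :=
            Finsupp.filter_single_of_neg _ (hnotin l hl)
          rw [hfilter_sub, h0, sub_zero]
        have hproji : (tsProj (E L) b) i = b i :=
          Finsupp.filter_apply_pos _ _ hL
        have hkey := IH (tsProj (E L) b) i (by rw [hproji]; exact hbi)
        rw [hproji] at hkey
        have hsplit1 : ∑ l, tnormAux θ S m (tsProj (E l) (b - Finsupp.single i 1))
            = (∑ l ∈ Finset.univ.erase L, tnormAux θ S m (tsProj (E l) b))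
              + tnormAux θ S m (tsProj (E L) b - Finsupp.single i 1) := by
          rw [← Finset.sum_erase_add _ _ (Finset.mem_univ L), hprojL]
          congr 1
          exact Finset.sum_congr rfl fun l hl => by
            rw [hprojl l (Finset.ne_of_mem_erase hl)]
        have hsplit2 : (∑ l ∈ Finset.univ.erase L, tnormAux θ S m (tsProj (E l) b))
            + tnormAux θ S m (tsProj (E L) b) = ∑ l, tnormAux θ S m (tsProj (E l) b) :=
          Finset.sum_erase_add _ _ (Finset.mem_univ L)
        have hNL : 0 ≤ tnormAux θ S m (tsProj (E L) b) := tnormAux_nonneg m _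
        rw [← hsplit2] at hK
        have hθNL : 0 ≤ θ * tnormAux θ S m (tsProj (E L) b) := mul_nonneg hθ0.le hNL
        rcases le_max_iff.mp hkey with hcase | hcase
        · refine le_max_of_le_right ?_
          have h6 : θ * ∑ l, tnormAux θ S m (tsProj (E l) (b - Finsupp.single i 1))
              ≤ θ * ((∑ l ∈ Finset.univ.erase L, tnormAux θ S m (tsProj (E l) b))
                  + (1 - b i)) := by
            rw [hsplit1]
            exact mul_le_mul_of_nonneg_left (by linarith) hθ0.le
          nlinarith [hK, hθNL]
        · refine le_max_of_le_right ?_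
          have h6 : θ * ∑ l, tnormAux θ S m (tsProj (E l) (b - Finsupp.single i 1))
              ≤ θ * ((∑ l ∈ Finset.univ.erase L, tnormAux θ S m (tsProj (E l) b))
                  + (tnormAux θ S m (tsProj (E L) b) + θ * (1 - b i))) := by
            rw [hsplit1]
            exact mul_le_mul_of_nonneg_left (by linarith) hθ0.le
          have h7 : θ * (θ * (1 - b i)) ≤ θ * (1 - b i) :=
            mul_le_of_le_one_left hθbi hθ1
          nlinarith [hK]
      · push_neg at hiE
        have hall : ∀ l, tsProj (E l) (b - Finsupp.single i 1) = tsProj (E l) b := by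
          intro l
          have h0 : tsProj (E l) (Finsupp.single i (1 : ℝ)) = 0 :=
            Finsupp.filter_single_of_neg _ (hiE l)
          rw [hfilter_sub, h0, sub_zero]
        have heq : ∑ l, tnormAux θ S m (tsProj (E l) (b - Finsupp.single i 1))
            = ∑ l, tnormAux θ S m (tsProj (E l) b) :=
          Finset.sum_congr rfl fun l _ => by rw [hall l]
        rw [heq]
        exact le_max_of_le_right (by linarith [hK])

lemma tnorm_sub_single_le (hθ0 : 0 < θ) (hθ1 : θ ≤ 1) (hS : (∅ : Finset ℕ+) ∈ S)
    (b : ℕ+ →₀ ℝ) (i : ℕ+) (hbi : b i ≤ 1) :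
    tnorm θ S (b - Finsupp.single i 1)
      ≤ max (1 - b i) (tnorm θ S b + θ * (1 - b i)) := by
  refine ciSup_le fun m => ?_
  refine (tnormAux_sub_single_le hθ0 hθ1 hS m b i hbi).trans (max_le_max le_rfl ?_)
  exact add_le_add (tnormAux_le_tnorm hθ0.le hθ1 hS m b) le_rfl

end TsAux

namespace TsAux

open Filter Topology

lemma empty_mem_schreier (n : ℕ) : (∅ : Finset ℕ+) ∈ Schreier n := by
  match n with
  | 0 => simp [Schreier]
  | 1 => simp [Schreier]
  | (k + 2) => exact Or.inl rfl

section SpaceLemmas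

variable {θ : ℝ} {n : ℕ} {X : Type*} [NormedAddCommGroup X] [NormedSpace ℝ X] {e : ℕ+ → X}

lemma jsum_single (e : ℕ+ → X) (j : ℕ+) (c : ℝ) :
    (Finsupp.single j c).sum (fun k c => c • e k) = c • e j :=
  Finsupp.sum_single_index (by simp)

lemma jsum_sub (e : ℕ+ → X) (x y : ℕ+ →₀ ℝ) :
    (x - y).sum (fun k c => c • e k)
      = x.sum (fun k c => c • e k) - y.sum (fun k c => c • e k) :=
  Finsupp.sum_sub_index (fun a b₁ b₂ => sub_smul b₁ b₂ (e a))

lemma jsum_finset (e : ℕ+ → X) (a : ℕ+ → ℝ) (s : Finset ℕ+) :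
    (∑ k ∈ s, Finsupp.single k (a k)).sum (fun k c => c • e k) = ∑ k ∈ s, a k • e k := by
  rw [← Finsupp.sum_finset_sum_index (by simp) (fun a b₁ b₂ => add_smul b₁ b₂ (e a))]
  exact Finset.sum_congr rfl fun k _ => jsum_single e k (a k)

lemma bs_apply (a : ℕ+ → ℝ) (s : Finset ℕ+) {j : ℕ+} (hj : j ∈ s) :
    (∑ k ∈ s, Finsupp.single k (a k)) j = a j := by
  rw [Finset.sum_apply']
  rw [Finset.sum_eq_single j (fun k _ hk => Finsupp.single_eq_of_ne' hk)
    (fun h => absurd hj h)]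
  simp

/-- The coordinate functionals are bounded by the norm. -/
lemma coord_abs_le_norm (hθ0 : 0 < θ) (hθh : θ ≤ 1 / 2)
    (hX : IsTsirelsonSpace θ n X e) {a : ℕ+ → ℝ} {v : X}
    (hsum : HasSum (fun k => a k • e k) v) (j : ℕ+) : |a j| ≤ ‖v‖ := by
  have hθ1 : θ ≤ 1 := hθh.trans (by norm_num)
  have hS := empty_mem_schreier n
  have ht : Tendsto (fun s : Finset ℕ+ => ∑ k ∈ s, a k • e k) atTop (𝓝 v) := hsum
  refine ge_of_tendsto ht.norm ?_
  filter_upwards [Filter.eventually_ge_atTop ({j} : Finset ℕ+)] with s hs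
  have hj : j ∈ s := Finset.singleton_subset_iff.mp hs
  have h1 : ∑ k ∈ s, a k • e k
      = (∑ k ∈ s, Finsupp.single k (a k)).sum (fun k c => c • e k) :=
    (jsum_finset e a s).symm
  rw [h1, hX.norm_embed]
  have h2 := abs_le_tnorm hθ0.le hθ1 hS (∑ k ∈ s, Finsupp.single k (a k)) j
  rwa [bs_apply a s hj] at h2

/-- Pinning: if `‖v‖ = 1` and `‖v - e i‖ = 2`, then the `i`-th coordinate is `-1`. -/
lemma coord_eq_neg_one (hθ0 : 0 < θ) (hθh : θ ≤ 1 / 2)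
    (hX : IsTsirelsonSpace θ n X e) {a : ℕ+ → ℝ} {v : X}
    (hsum : HasSum (fun k => a k • e k) v) (hv : ‖v‖ = 1) (i : ℕ+)
    (hdist : ‖v - e i‖ = 2) : a i = -1 := by
  have hθ1 : θ ≤ 1 := hθh.trans (by norm_num)
  have hS := empty_mem_schreier n
  have hai : |a i| ≤ 1 := hv ▸ coord_abs_le_norm hθ0 hθh hX hsum i
  have hm1 : -1 ≤ a i := (abs_le.mp hai).1
  have hp1 : a i ≤ 1 := (abs_le.mp hai).2
  have ht : Tendsto (fun s : Finset ℕ+ => ∑ k ∈ s, a k • e k) atTop (𝓝 v) := hsum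
  have hF : Tendsto (fun s : Finset ℕ+ => ‖(∑ k ∈ s, a k • e k) - e i‖) atTop
      (𝓝 ‖v - e i‖) := (ht.sub tendsto_const_nhds).norm
  have hG : Tendsto
      (fun s : Finset ℕ+ => max (1 - a i) (‖∑ k ∈ s, a k • e k‖ + θ * (1 - a i)))
      atTop (𝓝 (max (1 - a i) (1 + θ * (1 - a i)))) := by
    have h1 : Tendsto (fun s : Finset ℕ+ => ‖∑ k ∈ s, a k • e k‖ + θ * (1 - a i))
        atTop (𝓝 (‖v‖ + θ * (1 - a i))) := ht.norm.add tendsto_const_nhds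
    rw [hv] at h1
    exact tendsto_const_nhds.max h1
  have hle : ∀ᶠ s : Finset ℕ+ in atTop,
      ‖(∑ k ∈ s, a k • e k) - e i‖
        ≤ max (1 - a i) (‖∑ k ∈ s, a k • e k‖ + θ * (1 - a i)) := by
    filter_upwards [Filter.eventually_ge_atTop ({i} : Finset ℕ+)] with s hs
    have hi : i ∈ s := Finset.singleton_subset_iff.mp hs
    have e2 : ∑ k ∈ s, a k • e k
        = (∑ k ∈ s, Finsupp.single k (a k)).sum (fun k c => c • e k) :=
      (jsum_finset e a s).symm
    have e1 : (∑ k ∈ s, a k • e k) - e i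
        = ((∑ k ∈ s, Finsupp.single k (a k)) - Finsupp.single i 1).sum
            (fun k c => c • e k) := by
      rw [jsum_sub, jsum_single, one_smul, jsum_finset]
    rw [e1, e2, hX.norm_embed, hX.norm_embed]
    have hbi : (∑ k ∈ s, Finsupp.single k (a k)) i ≤ 1 := by
      rw [bs_apply a s hi]; exact hp1
    have h3 := tnorm_sub_single_le hθ0 hθ1 hS (∑ k ∈ s, Finsupp.single k (a k)) i hbi
    rwa [bs_apply a s hi] at h3
  have h2 := le_of_tendsto_of_tendsto hF hG hle
  rw [hdist] at h2
  rcases le_max_iff.mp h2 with h | h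
  · linarith
  · nlinarith [mul_nonneg (by linarith : (0:ℝ) ≤ 1/2 - θ) (by linarith : (0:ℝ) ≤ 1 - a i)]

lemma norm_e_eq_one (hθ0 : 0 < θ) (hθh : θ ≤ 1 / 2)
    (hX : IsTsirelsonSpace θ n X e) (j : ℕ+) : ‖e j‖ = 1 := by
  have h1 := hX.norm_embed (Finsupp.single j 1)
  rw [jsum_single, one_smul] at h1
  rw [h1]
  exact tnorm_single_one hθ0.le hθh (empty_mem_schreier n) j

lemma norm_e_pair (hθ0 : 0 < θ) (hθh : θ ≤ 1 / 2)
    (hX : IsTsirelsonSpace θ n X e) {i j : ℕ+} (hij : i ≠ j) {c : ℝ} (hc : |c| = 1) :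
    ‖e i + c • e j‖ = 1 := by
  have h1 := hX.norm_embed (Finsupp.single i 1 + Finsupp.single j c)
  have h2 : (Finsupp.single i (1:ℝ) + Finsupp.single j c).sum (fun k c => c • e k)
      = e i + c • e j := by
    rw [Finsupp.sum_add_index (by simp) (by intros; simp [add_smul]),
      jsum_single, jsum_single, one_smul]
  rw [h2] at h1
  rw [h1]
  exact tnorm_pair hθ0.le hθh (empty_mem_schreier n) hij hc

end SpaceLemmas

end TsAux

open TsAux

/-- If `U` is an isometry of the unit sphere of `T[θ, S_n]` with
`−U(S) ⊆ U(S)`, then `−U(eᵢ) = U(−eᵢ)` for every `i`. -/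
theorem tsirelson_sphere_isometry_odd
    (θ : ℝ) (hθ0 : 0 < θ) (hθ : θ ≤ 1 / 2) (n : ℕ) (hn : 1 ≤ n)
    (X : Type*) [NormedAddCommGroup X] [NormedSpace ℝ X] (e : ℕ+ → X)
    (hX : IsTsirelsonSpace θ n X e)
    (U : Metric.sphere (0 : X) 1 → Metric.sphere (0 : X) 1)
    (hU : Isometry U)
    (hsym : ∀ z : Metric.sphere (0 : X) 1, ∃ w : Metric.sphere (0 : X) 1,
      (U w : X) = -(U z : X)) :
    ∀ (i : ℕ+) (h₁ : e i ∈ Metric.sphere (0 : X) 1)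
      (h₂ : -e i ∈ Metric.sphere (0 : X) 1),
      -((U ⟨e i, h₁⟩ : X)) = (U ⟨-e i, h₂⟩ : X) := by
  classical
  intro i h₁ h₂
  obtain ⟨w, hw⟩ := hsym ⟨e i, h₁⟩
  have two_norm : ∀ p : Metric.sphere (0 : X) 1, ‖(-(p : X)) - p‖ = 2 := by
    intro p
    have hp : ‖(p : X)‖ = 1 := mem_sphere_zero_iff_norm.mp p.2
    have h1 : (-(p : X)) - p = -((p : X) + p) := by abel
    rw [h1, norm_neg, ← two_smul ℝ (p : X), norm_smul, hp]
    norm_num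
  have pin_dist : ∀ (z w' : Metric.sphere (0 : X) 1),
      (U w' : X) = -(U z : X) → ‖(w' : X) - (z : X)‖ = 2 := by
    intro z w' hw'
    have h1 : dist ((w' : X)) ((z : X)) = dist ((U w' : X)) ((U z : X)) := by
      rw [← Subtype.dist_eq w' z, ← Subtype.dist_eq (U w') (U z), hU.dist_eq]
    rw [dist_eq_norm, dist_eq_norm, hw', two_norm (U z)] at h1
    exact h1
  have wit_dist : ∀ (z₁ z₂ w₁ w₂ : Metric.sphere (0 : X) 1),
      (U w₁ : X) = -(U z₁ : X) → (U w₂ : X) = -(U z₂ : X) →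
      ‖(w₁ : X) - (w₂ : X)‖ = ‖(z₁ : X) - (z₂ : X)‖ := by
    intro z₁ z₂ w₁ w₂ hw₁ hw₂
    have h1 : dist ((w₁ : X)) ((w₂ : X)) = dist ((U w₁ : X)) ((U w₂ : X)) := by
      rw [← Subtype.dist_eq w₁ w₂, ← Subtype.dist_eq (U w₁) (U w₂), hU.dist_eq]
    rw [hw₁, hw₂, dist_neg_neg] at h1
    have h2 : dist ((U z₁ : X)) ((U z₂ : X)) = dist ((z₁ : X)) ((z₂ : X)) := by
      rw [← Subtype.dist_eq (U z₁) (U z₂), ← Subtype.dist_eq z₁ z₂, hU.dist_eq]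
    rw [h2, dist_eq_norm] at h1
    rw [dist_eq_norm] at h1
    exact h1
  have hsph : ∀ j : ℕ+, e j ∈ Metric.sphere (0 : X) 1 :=
    fun j => mem_sphere_zero_iff_norm.mpr (norm_e_eq_one hθ0 hθ hX j)
  have hsphneg : ∀ j : ℕ+, -e j ∈ Metric.sphere (0 : X) 1 := fun j =>
    mem_sphere_zero_iff_norm.mpr
      (by rw [norm_neg]; exact norm_e_eq_one hθ0 hθ hX j)
  obtain ⟨c, hc, -⟩ := hX.expansion (w : X)
  have hwnorm : ‖(w : X)‖ = 1 := mem_sphere_zero_iff_norm.mp w.2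
  have hci : c i = -1 :=
    coord_eq_neg_one hθ0 hθ hX hc hwnorm i (pin_dist ⟨e i, h₁⟩ w hw)
  have hcj : ∀ j : ℕ+, j ≠ i → c j = 0 := by
    intro j hj
    obtain ⟨wj, hwj⟩ := hsym ⟨e j, hsph j⟩
    obtain ⟨wj', hwj'⟩ := hsym ⟨-e j, hsphneg j⟩
    obtain ⟨cj, hcjsum, -⟩ := hX.expansion (wj : X)
    obtain ⟨cj', hcj'sum, -⟩ := hX.expansion (wj' : X)
    have hwjnorm : ‖(wj : X)‖ = 1 := mem_sphere_zero_iff_norm.mp wj.2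
    have hwj'norm : ‖(wj' : X)‖ = 1 := mem_sphere_zero_iff_norm.mp wj'.2
    have hpin1 : cj j = -1 :=
      coord_eq_neg_one hθ0 hθ hX hcjsum hwjnorm j (pin_dist ⟨e j, hsph j⟩ wj hwj)
    have hnegsum : HasSum (fun k => (-(cj' k)) • e k) (-(wj' : X)) := by
      simpa [neg_smul] using hcj'sum.neg
    have hnegnorm : ‖(-(wj' : X))‖ = 1 := by rw [norm_neg]; exact hwj'norm
    have hd' : ‖(-(wj' : X)) - e j‖ = 2 := by
      have h0 : ‖(wj' : X) - (-(e j))‖ = 2 := pin_dist ⟨-e j, hsphneg j⟩ wj' hwj'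
      have h5 : (-(wj' : X)) - e j = -((wj' : X) - (-(e j))) := by abel
      rw [h5, norm_neg, h0]
    have hpin2 : cj' j = 1 := by
      have h6 := coord_eq_neg_one hθ0 hθ hX hnegsum hnegnorm j hd'
      linarith
    have hdist1 : ‖(w : X) - (wj : X)‖ = 1 := by
      have h9 := wit_dist ⟨e i, h₁⟩ ⟨e j, hsph j⟩ w wj hw hwj
      rw [h9]
      show ‖e i - e j‖ = 1
      have h10 : e i - e j = e i + (-1 : ℝ) • e j := by
        rw [neg_one_smul]; abel
      rw [h10]
      exact norm_e_pair hθ0 hθ hX (Ne.symm hj) (by norm_num)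
    have hdist2 : ‖(w : X) - (wj' : X)‖ = 1 := by
      have h9 := wit_dist ⟨e i, h₁⟩ ⟨-e j, hsphneg j⟩ w wj' hw hwj'
      rw [h9]
      show ‖e i - (-e j)‖ = 1
      have h10 : e i - (-e j) = e i + (1 : ℝ) • e j := by
        rw [one_smul]; abel
      rw [h10]
      exact norm_e_pair hθ0 hθ hX (Ne.symm hj) (by norm_num)
    have hsub1 : HasSum (fun k => (c k - cj k) • e k) ((w : X) - (wj : X)) := by
      simpa [sub_smul] using hc.sub hcjsum
    have hsub2 : HasSum (fun k => (c k - cj' k) • e k) ((w : X) - (wj' : X)) := by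
      simpa [sub_smul] using hc.sub hcj'sum
    have hb1 : |c j - cj j| ≤ 1 := by
      have h11 := coord_abs_le_norm hθ0 hθ hX hsub1 j
      rwa [hdist1] at h11
    have hb2 : |c j - cj' j| ≤ 1 := by
      have h11 := coord_abs_le_norm hθ0 hθ hX hsub2 j
      rwa [hdist2] at h11
    rw [hpin1] at hb1
    rw [hpin2] at hb2
    have hb1' := abs_le.mp hb1
    have hb2' := abs_le.mp hb2
    linarith [hb1'.1, hb1'.2, hb2'.1, hb2'.2]
  have hwX : (w : X) = -(e i) := by
    have hfun : (fun k => c k • e k) = (fun k => if k = i then -(e i) else 0) := by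
      funext k
      by_cases hk : k = i
      · subst hk
        rw [hci]
        simp
      · rw [hcj k hk]
        simp [hk]
    have hsum2 : HasSum (fun k => c k • e k) (-(e i)) := by
      rw [hfun]
      exact hasSum_ite_eq i (-(e i))
    exact hc.unique hsum2
  have hweq : w = (⟨-e i, h₂⟩ : Metric.sphere (0 : X) 1) := Subtype.ext hwX
  rw [← hweq]
  exact hw.symm
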